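/- For all n ≥ 1, i ≥ 1 and j ≥ 0, the factorial j! divides A(n,i,j). -/

import Mathlib

namespace AltAux

open List

attribute [local instance] Classical.propDecidable

/-! ### List-level block machinery -/

variable (S : Finset ℕ)

def R (a b : ℕ) : Prop := b < a → b ∈ S

def Good (b : List ℕ) : Prop := ∃ a t, b = a :: t ∧ a ∈ S ∧ ∀ x ∈ t, x ∉ S

noncomputable def split : List ℕ → List ℕ × List (List ℕ)
  | [] => ([], [])
  | a :: t =>
    if a ∈ S then ([], (a :: (split t).1) :: (split t).2)
    else (a :: (split t).1, (split t).2)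

theorem split_cons_mem {a : ℕ} (h : a ∈ S) (t : List ℕ) :
    split S (a :: t) = ([], (a :: (split S t).1) :: (split S t).2) := by
  simp [split, h]

theorem split_cons_not_mem {a : ℕ} (h : a ∉ S) (t : List ℕ) :
    split S (a :: t) = (a :: (split S t).1, (split S t).2) := by
  simp [split, h]

theorem split_flatten_eq (w : List ℕ) : (split S w).1 ++ (split S w).2.flatten = w := by
  induction w with
  | nil => rfl
  | cons a t ih =>
    by_cases h : a ∈ S
    · rw [split_cons_mem S h]; simpa using ih
    · rw [split_cons_not_mem S h]; simpa using ih

theorem split_shape (w : List ℕ) :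
    (∀ x ∈ (split S w).1, x ∉ S) ∧ (∀ b ∈ (split S w).2, Good S b) := by
  induction w with
  | nil => simp [split]
  | cons a t ih =>
    by_cases h : a ∈ S
    · rw [split_cons_mem S h]
      refine ⟨by simp, ?_⟩
      intro b hb
      rcases List.mem_cons.1 hb with rfl | hb
      · exact ⟨a, (split S t).1, rfl, h, ih.1⟩
      · exact ih.2 b hb
    · rw [split_cons_not_mem S h]
      refine ⟨?_, ih.2⟩
      intro x hx
      rcases List.mem_cons.1 hx with rfl | hx
      · exact h
      · exact ih.1 x hx

theorem split_append_not_mem {B : List ℕ} (hB : ∀ x ∈ B, x ∉ S) (w : List ℕ) :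
    split S (B ++ w) = (B ++ (split S w).1, (split S w).2) := by
  induction B with
  | nil => simp
  | cons a t ih =>
    have ha : a ∉ S := hB a (by simp)
    rw [List.cons_append, split_cons_not_mem S ha,
      ih (fun x hx => hB x (List.mem_cons_of_mem _ hx))]
    simp

theorem split_flatten_blocks {bs : List (List ℕ)} (hbs : ∀ b ∈ bs, Good S b) :
    split S bs.flatten = ([], bs) := by
  induction bs with
  | nil => rfl
  | cons b t ih =>
    obtain ⟨a, tl, rfl, ha, htl⟩ := hbs b (by simp)
    rw [List.flatten_cons, List.cons_append, split_cons_mem S ha,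
      split_append_not_mem S htl,
      ih (fun b hb => hbs b (List.mem_cons_of_mem _ hb))]
    simp

theorem split_reassemble {B : List ℕ} {bs : List (List ℕ)}
    (hB : ∀ x ∈ B, x ∉ S) (hbs : ∀ b ∈ bs, Good S b) :
    split S (B ++ bs.flatten) = (B, bs) := by
  rw [split_append_not_mem S hB, split_flatten_blocks S hbs]; simp

theorem split_heads (w : List ℕ) :
    (split S w).2.map headI = w.filter (fun x => x ∈ S) := by
  induction w with
  | nil => rfl
  | cons a t ih =>
    by_cases h : a ∈ S
    · rw [split_cons_mem S h]
      simpa [h] using ih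
    · rw [split_cons_not_mem S h]
      simpa [h] using ih

theorem valid_flatten {B : List ℕ} {bs : List (List ℕ)}
    (hbs : ∀ b ∈ bs, Good S b) :
    Chain' (R S) (B ++ bs.flatten) ↔ Chain' (R S) B ∧ ∀ b ∈ bs, Chain' (R S) b := by
  have hne : [] ∉ bs := by
    intro h
    obtain ⟨a, t, ht, -, -⟩ := hbs [] h
    exact (List.cons_ne_nil a t) ht.symm
  have hhead : ∀ b ∈ bs, ∀ y ∈ b.head?, y ∈ S := by
    intro b hb y hy
    obtain ⟨a, t, rfl, ha, -⟩ := hbs b hb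
    simp only [List.head?_cons, Option.mem_some_iff] at hy
    exact hy ▸ ha
  simp only [List.Chain']
  rw [List.isChain_append, List.isChain_flatten hne]
  constructor
  · rintro ⟨h1, ⟨h2, -⟩, -⟩; exact ⟨h1, h2⟩
  · rintro ⟨h1, h2⟩
    refine ⟨h1, ⟨h2, ?_⟩, ?_⟩
    · refine List.Pairwise.isChain ?_
      refine List.pairwise_of_forall_mem_list ?_
      intro b hb c hc x hx y hy _
      exact hhead c hc y hy
    · intro x hx y hy
      rcases bs with _ | ⟨b, t⟩
      · simp at hy
      · have hbne : b ≠ [] := by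
          intro h; exact hne (h ▸ (by simp : b ∈ b :: t))
        rw [List.flatten_cons, List.head?_append_of_ne_nil _ hbne] at hy
        intro _
        exact hhead b ((by simp : b ∈ b :: t)) y hy

variable {S}

theorem flatten_perm {α : Type*} {l₁ l₂ : List (List α)} (h : l₁ ~ l₂) :
    l₁.flatten ~ l₂.flatten := by
  induction h with
  | nil => rfl
  | cons x _ ih => exact ih.append_left x
  | swap x y l =>
    simp only [List.flatten_cons, ← List.append_assoc]
    exact (List.perm_append_comm).append_right l.flatten
  | trans _ _ ih1 ih2 => exact ih1.trans ih2

def get' {α : Type*} (l : List α) {j : ℕ} (h : l.length = j) (k : Fin j) : α :=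
  l.get ⟨k.1, by rw [h]; exact k.2⟩

theorem get'_congr {α : Type*} {l l' : List α} {j : ℕ} (e : l = l')
    (h : l.length = j) (h' : l'.length = j) (k : Fin j) :
    get' l h k = get' l' h' k := by subst e; rfl

theorem get'_mem {α : Type*} (l : List α) {j : ℕ} (h : l.length = j) (k : Fin j) :
    get' l h k ∈ l := l.get_mem _

theorem map_finRange_get' {α : Type*} {l : List α} {j : ℕ} (h : l.length = j) :
    (List.finRange j).map (get' l h) = l := by
  subst h
  exact List.map_get_finRange l

theorem get'_map_finRange {α : Type*} {j : ℕ} (f : Fin j → α) (k : Fin j)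
    (h : ((List.finRange j).map f).length = j) :
    get' ((List.finRange j).map f) h k = f k := by
  simp [get']

theorem get'_map {α β : Type*} (f : α → β) (l : List α) {j : ℕ}
    (h : (l.map f).length = j) (h' : l.length = j) (k : Fin j) :
    get' (l.map f) h k = f (get' l h' k) := by
  simp [get']

theorem map_finRange_perm {j : ℕ} (e : Fin j ≃ Fin j) :
    (List.finRange j).map e ~ List.finRange j := by
  refine List.perm_of_nodup_nodup_toFinset_eq
    (List.Nodup.map e.injective (List.nodup_finRange j)) (List.nodup_finRange j) ?_
  ext k
  simp only [List.mem_toFinset, List.mem_map, List.mem_finRange, true_and, iff_true]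
  exact ⟨e.symm k, by simp⟩

noncomputable def listEquiv {S : Finset ℕ} {j : ℕ} (l : List ℕ) (hnd : l.Nodup)
    (h : l.length = j) (hmem : ∀ v, v ∈ l ↔ v ∈ S) : Fin j ≃ {v : ℕ // v ∈ S} where
  toFun k := ⟨get' l h k, (hmem _).1 (l.get_mem _)⟩
  invFun v := ⟨List.idxOf v.1 l, by
    rw [← h]; exact List.idxOf_lt_length_iff.2 ((hmem _).2 v.2)⟩
  left_inv k := by
    apply Fin.ext
    simpa [get'] using List.get_idxOf hnd ⟨k.1, by rw [h]; exact k.2⟩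
  right_inv v := by
    apply Subtype.ext
    exact List.idxOf_get _

theorem listEquiv_apply {S : Finset ℕ} {j : ℕ} (l : List ℕ) (hnd : l.Nodup)
    (h : l.length = j) (hmem : ∀ v, v ∈ l ↔ v ∈ S) (k : Fin j) :
    (listEquiv l hnd h hmem k : ℕ) = get' l h k := rfl

/-! ### Bundled words and the rearrangement action -/

structure W (n j : ℕ) (S : Finset ℕ) : Type where
  w : List ℕ
  hmem : ∀ m, m ∈ w ↔ m ∈ Finset.Icc 1 n
  hnd : w.Nodup
  hlen : w.length = n
  hS : S.card = j
  hSsub : ∀ s ∈ S, s ∈ Finset.Icc 1 n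

namespace W

variable {n j : ℕ} {S : Finset ℕ} (x : W n j S)

theorem ext' {x y : W n j S} (h : x.w = y.w) : x = y := by
  cases x; cases y; simpa using h

noncomputable def Lst (_x : W n j S) : List ℕ := S.sort (· ≤ ·)

theorem Lst_nodup : x.Lst.Nodup := Finset.sort_nodup _ _

theorem Lst_len : x.Lst.length = j := by
  rw [Lst, Finset.length_sort, x.hS]

theorem Lst_mem (v : ℕ) : v ∈ x.Lst ↔ v ∈ S := Finset.mem_sort _

noncomputable def aL : List ℕ := x.w.filter (fun v => v ∈ S)

theorem aL_nodup : x.aL.Nodup := x.hnd.filter _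

theorem aL_mem (v : ℕ) : v ∈ x.aL ↔ v ∈ S := by
  simp only [aL, List.mem_filter, decide_eq_true_eq]
  constructor
  · rintro ⟨-, h⟩; exact h
  · intro h
    exact ⟨(x.hmem v).2 (x.hSsub v h), h⟩

theorem aL_perm : x.aL ~ x.Lst := by
  refine List.perm_of_nodup_nodup_toFinset_eq x.aL_nodup x.Lst_nodup ?_
  ext v
  rw [List.mem_toFinset, List.mem_toFinset, x.aL_mem, x.Lst_mem]

theorem aL_len : x.aL.length = j := x.aL_perm.length_eq.trans x.Lst_len

noncomputable def eL : Fin j ≃ {v : ℕ // v ∈ S} :=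
  listEquiv x.Lst x.Lst_nodup x.Lst_len x.Lst_mem

noncomputable def eA : Fin j ≃ {v : ℕ // v ∈ S} :=
  listEquiv x.aL x.aL_nodup x.aL_len x.aL_mem

noncomputable def pat : Equiv.Perm (Fin j) := x.eL.trans x.eA.symm

theorem eA_pat (k : Fin j) : x.eA (x.pat k) = x.eL k := by
  simp [pat]

theorem eA_val (k : Fin j) : (x.eA k : ℕ) = get' x.aL x.aL_len k := rfl

theorem eL_val (k : Fin j) : (x.eL k : ℕ) = get' x.Lst x.Lst_len k := rfl

noncomputable def B0 : List ℕ := (split S x.w).1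

noncomputable def bs : List (List ℕ) := (split S x.w).2

theorem heads : x.bs.map headI = x.aL := split_heads S x.w

theorem bs_len : x.bs.length = j := by
  have := congrArg List.length x.heads
  rw [List.length_map] at this
  rw [this, x.aL_len]

theorem headI_get' (t : Fin j) :
    (get' x.bs x.bs_len t).headI = get' x.aL x.aL_len t := by
  rw [← get'_map headI x.bs (by rw [List.length_map, x.bs_len]) x.bs_len t]
  exact get'_congr x.heads _ _ _

noncomputable def blockAt (k : Fin j) : List ℕ := get' x.bs x.bs_len (x.pat k)

theorem blockAt_mem (k : Fin j) : x.blockAt k ∈ x.bs := get'_mem _ _ _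

theorem blockAt_good (k : Fin j) : Good S (x.blockAt k) :=
  (split_shape S x.w).2 _ (x.blockAt_mem k)

theorem headI_blockAt (k : Fin j) :
    (x.blockAt k).headI = get' x.Lst x.Lst_len k := by
  rw [blockAt, x.headI_get']
  have := congrArg Subtype.val (x.eA_pat k)
  rwa [x.eA_val, x.eL_val] at this

noncomputable def nbs (σ : Equiv.Perm (Fin j)) : List (List ℕ) :=
  (List.finRange j).map (fun t => x.blockAt ((σ * x.pat)⁻¹ t))

theorem nbs_len (σ : Equiv.Perm (Fin j)) : (x.nbs σ).length = j := by
  simp [nbs]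

theorem nbs_get' (σ : Equiv.Perm (Fin j)) (h : (x.nbs σ).length = j) (t : Fin j) :
    get' (x.nbs σ) h t = x.blockAt ((σ * x.pat)⁻¹ t) :=
  get'_map_finRange _ _ _

theorem nbs_good (σ : Equiv.Perm (Fin j)) : ∀ b ∈ x.nbs σ, Good S b := by
  intro b hb
  obtain ⟨t, -, rfl⟩ := List.mem_map.1 hb
  exact x.blockAt_good _

theorem nbs_perm (σ : Equiv.Perm (Fin j)) : x.nbs σ ~ x.bs := by
  have h1 : x.nbs σ = ((List.finRange j).map (x.pat * (σ * x.pat)⁻¹ : Equiv.Perm (Fin j))).map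
      (get' x.bs x.bs_len) := by
    rw [List.map_map]
    rfl
  rw [h1]
  have h2 := (map_finRange_perm ((x.pat * (σ * x.pat)⁻¹ : Equiv.Perm (Fin j)) :
      Fin j ≃ Fin j)).map (get' x.bs x.bs_len)
  rwa [map_finRange_get'] at h2

noncomputable def nw (σ : Equiv.Perm (Fin j)) : List ℕ :=
  x.B0 ++ (x.nbs σ).flatten

theorem nw_perm (σ : Equiv.Perm (Fin j)) : x.nw σ ~ x.w := by
  have : x.B0 ++ x.bs.flatten = x.w := split_flatten_eq S x.w
  calc x.nw σ ~ x.B0 ++ x.bs.flatten := (flatten_perm (x.nbs_perm σ)).append_left x.B0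
  _ = x.w := this

noncomputable def act (σ : Equiv.Perm (Fin j)) : W n j S where
  w := x.nw σ
  hmem m := ((x.nw_perm σ).mem_iff).trans (x.hmem m)
  hnd := x.hnd.perm (x.nw_perm σ).symm
  hlen := ((x.nw_perm σ).length_eq).trans x.hlen
  hS := x.hS
  hSsub := x.hSsub

theorem act_w (σ : Equiv.Perm (Fin j)) : (x.act σ).w = x.nw σ := rfl

theorem split_act (σ : Equiv.Perm (Fin j)) :
    split S (x.act σ).w = (x.B0, x.nbs σ) :=
  split_reassemble S (split_shape S x.w).1 (x.nbs_good σ)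

theorem act_B0 (σ : Equiv.Perm (Fin j)) : (x.act σ).B0 = x.B0 := by
  have := congrArg Prod.fst (x.split_act σ)
  simpa [B0] using this

theorem act_bs (σ : Equiv.Perm (Fin j)) : (x.act σ).bs = x.nbs σ := by
  have := congrArg Prod.snd (x.split_act σ)
  simpa [bs] using this

theorem act_aL_get (σ : Equiv.Perm (Fin j)) (t : Fin j) :
    get' (x.act σ).aL (x.act σ).aL_len t = get' x.Lst x.Lst_len ((σ * x.pat)⁻¹ t) := by
  have h0 : (x.act σ).aL = (x.nbs σ).map headI := by
    rw [← (x.act σ).heads, x.act_bs]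
  rw [get'_congr h0 _ (by rw [List.length_map, x.nbs_len]) t,
    get'_map headI _ _ (x.nbs_len σ) t, x.nbs_get', x.headI_blockAt]

theorem act_pat (σ : Equiv.Perm (Fin j)) : (x.act σ).pat = σ * x.pat := by
  apply Equiv.ext
  intro k
  have key : (x.act σ).eA ((σ * x.pat) k) = (x.act σ).eL k := by
    apply Subtype.ext
    rw [(x.act σ).eA_val, (x.act σ).eL_val]
    rw [x.act_aL_get σ ((σ * x.pat) k)]
    simp only [Equiv.Perm.coe_inv, Equiv.symm_apply_apply]
    exact get'_congr rfl _ _ _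
  have : (x.act σ).pat k = (x.act σ).eA.symm ((x.act σ).eL k) := rfl
  rw [this, ← key, Equiv.symm_apply_apply]

theorem act_blockAt (σ : Equiv.Perm (Fin j)) : (x.act σ).blockAt = x.blockAt := by
  funext k
  rw [blockAt, get'_congr (x.act_bs σ) _ (x.nbs_len σ) _, x.act_pat σ, x.nbs_get']
  simp only [Equiv.Perm.coe_inv, Equiv.symm_apply_apply]

theorem act_act (σ τ : Equiv.Perm (Fin j)) : (x.act τ).act σ = x.act (σ * τ) := by
  apply ext'
  show (x.act τ).nw σ = x.nw (σ * τ)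
  rw [nw, nw, x.act_B0 τ]
  congr 1
  simp only [nbs, x.act_blockAt τ, x.act_pat τ, mul_assoc]

theorem act_one : x.act 1 = x := by
  apply ext'
  rw [act_w, nw, nbs]
  have : (fun t => x.blockAt ((1 * x.pat)⁻¹ t)) =
      get' x.bs x.bs_len := by
    funext t
    rw [one_mul, blockAt]
    simp only [Equiv.Perm.coe_inv, Equiv.apply_symm_apply]
  rw [this, map_finRange_get']
  exact split_flatten_eq S x.w

noncomputable def Valid : Prop := Chain' (R S) x.w

theorem valid_iff_parts : x.Valid ↔
    Chain' (R S) x.B0 ∧ ∀ b ∈ x.bs, Chain' (R S) b := by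
  rw [Valid, ← split_flatten_eq S x.w]
  exact valid_flatten S (split_shape S x.w).2

theorem act_valid (σ : Equiv.Perm (Fin j)) : (x.act σ).Valid ↔ x.Valid := by
  rw [x.valid_iff_parts, (x.act σ).valid_iff_parts, x.act_B0, x.act_bs]
  constructor <;> rintro ⟨h1, h2⟩ <;> refine ⟨h1, fun b hb => h2 b ?_⟩
  · exact ((x.nbs_perm σ).mem_iff).2 hb
  · exact ((x.nbs_perm σ).mem_iff).1 hb

end W






namespace W

variable {n j : ℕ} {S : Finset ℕ} (x : W n j S)

noncomputable def pfun : ℕ → ℕ := fun k =>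
  if h : 1 ≤ k ∧ k ≤ n then x.w.get ⟨k - 1, by rw [x.hlen]; omega⟩ else k

theorem pfun_in {k : ℕ} (h : 1 ≤ k ∧ k ≤ n) :
    x.pfun k = x.w.get ⟨k - 1, by rw [x.hlen]; omega⟩ := dif_pos h

theorem pfun_out {k : ℕ} (h : ¬(1 ≤ k ∧ k ≤ n)) : x.pfun k = k := dif_neg h

theorem pfun_in_Icc {k : ℕ} (h : 1 ≤ k ∧ k ≤ n) : x.pfun k ∈ Finset.Icc 1 n := by
  rw [x.pfun_in h]
  exact (x.hmem _).1 (x.w.get_mem _)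

theorem pfun_bij : Function.Bijective x.pfun := by
  constructor
  · intro a b hab
    by_cases ha : 1 ≤ a ∧ a ≤ n <;> by_cases hb : 1 ≤ b ∧ b ≤ n
    · rw [x.pfun_in ha, x.pfun_in hb] at hab
      have := (List.Nodup.get_inj_iff x.hnd).1 hab
      have := congrArg Fin.val this
      simp only at this
      omega
    · exfalso
      have h1 := x.pfun_in_Icc ha
      rw [hab, x.pfun_out hb] at h1
      rw [Finset.mem_Icc] at h1
      exact hb h1
    · exfalso
      have h1 := x.pfun_in_Icc hb
      rw [← hab, x.pfun_out ha] at h1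
      rw [Finset.mem_Icc] at h1
      exact ha h1
    · rwa [x.pfun_out ha, x.pfun_out hb] at hab
  · intro m
    by_cases hm : 1 ≤ m ∧ m ≤ n
    · have hmem : m ∈ x.w := (x.hmem m).2 (Finset.mem_Icc.2 hm)
      obtain ⟨t, ht⟩ := List.mem_iff_get.1 hmem
      refine ⟨t.1 + 1, ?_⟩
      have hlt : t.1 < n := lt_of_lt_of_eq t.2 x.hlen
      rw [x.pfun_in ⟨by omega, by omega⟩]
      have heq : x.w.get ⟨t.1 + 1 - 1, by have := t.2; omega⟩ = x.w.get t := rfl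
      exact heq.trans ht
    · exact ⟨m, x.pfun_out hm⟩

noncomputable def perm : Equiv.Perm ℕ := Equiv.ofBijective x.pfun x.pfun_bij

theorem perm_apply (k : ℕ) : x.perm k = x.pfun k := rfl

theorem perm_get {t : ℕ} (ht : t < n) :
    x.perm (t + 1) = x.w.get ⟨t, by rw [x.hlen]; omega⟩ := by
  rw [perm_apply, x.pfun_in ⟨by omega, by omega⟩]
  congr 1

theorem perm_word : (List.range n).map (fun t => x.perm (t + 1)) = x.w := by
  apply List.ext_get (by simp [x.hlen])
  intro t h1 h2
  have ht : t < n := by simpa using h1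
  simp only [List.get_eq_getElem, List.getElem_map, List.getElem_range]
  rw [x.perm_get ht]
  simp [List.get_eq_getElem]

end W

noncomputable def ofPerm (n j : ℕ) (S : Finset ℕ) (l : Equiv.Perm ℕ)
    (hfix : ∀ k ∉ Finset.Icc 1 n, l k = k) (hS : S.card = j)
    (hSsub : ∀ s ∈ S, s ∈ Finset.Icc 1 n) : W n j S where
  w := (List.range n).map (fun t => l (t + 1))
  hlen := by simp
  hnd := by
    refine List.Nodup.map ?_ List.nodup_range
    intro a b h
    have := l.injective h
    omega
  hmem := by
    have hIcc : ∀ k, k ∈ Finset.Icc 1 n ↔ l k ∈ Finset.Icc 1 n := by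
      intro k
      constructor
      · intro hk
        by_contra hlk
        have := hfix _ hlk
        have := l.injective this
        rw [this] at hlk
        exact hlk hk
      · intro hlk
        by_contra hk
        rw [hfix _ hk] at hlk
        exact hk hlk
    intro m
    simp only [List.mem_map, List.mem_range]
    constructor
    · rintro ⟨t, ht, rfl⟩
      exact (hIcc (t + 1)).1 (Finset.mem_Icc.2 ⟨by omega, by omega⟩)
    · intro hm
      have hu : l.symm m ∈ Finset.Icc 1 n := by
        rw [hIcc (l.symm m), l.apply_symm_apply]
        exact hm
      rw [Finset.mem_Icc] at hu
      refine ⟨l.symm m - 1, by omega, ?_⟩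
      have : l.symm m - 1 + 1 = l.symm m := by omega
      rw [this, l.apply_symm_apply]
  hS := hS
  hSsub := hSsub

theorem ofPerm_perm (n j : ℕ) (S : Finset ℕ) (l : Equiv.Perm ℕ)
    (hfix : ∀ k ∉ Finset.Icc 1 n, l k = k) (hS : S.card = j)
    (hSsub : ∀ s ∈ S, s ∈ Finset.Icc 1 n) :
    (ofPerm n j S l hfix hS hSsub).perm = l := by
  apply Equiv.ext
  intro k
  by_cases h : 1 ≤ k ∧ k ≤ n
  · rw [W.perm_apply, W.pfun_in _ h]
    have : ((ofPerm n j S l hfix hS hSsub).w).get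
        ⟨k - 1, by rw [(ofPerm n j S l hfix hS hSsub).hlen]; omega⟩ = l (k - 1 + 1) := by
      simp [ofPerm]
    rw [this]
    congr 1
    omega
  · rw [W.perm_apply, W.pfun_out _ h, hfix k (by rw [Finset.mem_Icc]; omega)]






noncomputable def Sfin (n : ℕ) (p : ℕ → ℕ∞) : Finset ℕ :=
  (Finset.Icc 2 n).filter (fun m => ∃ u ∈ Finset.Icc 1 n, p u = (m : ℕ∞))

theorem mem_Sfin {n : ℕ} {p : ℕ → ℕ∞} {m : ℕ} :
    m ∈ Sfin n p ↔ m ∈ Finset.Icc 2 n ∧ ∃ u ∈ Finset.Icc 1 n, p u = (m : ℕ∞) := by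
  simp only [Sfin, Finset.mem_filter]

theorem Sfin_sub (n : ℕ) (p : ℕ → ℕ∞) : ∀ s ∈ Sfin n p, s ∈ Finset.Icc 1 n := by
  intro s hs
  rw [mem_Sfin] at hs
  rw [Finset.mem_Icc] at hs ⊢
  omega

def Xt (n i j : ℕ) : Type :=
  {lp : Equiv.Perm ℕ × (ℕ → ℕ∞) //
    (∀ x, x ∉ Finset.Icc 1 n → lp.1 x = x) ∧
    (∀ x, x ∉ Finset.Icc 1 n → lp.2 x = ⊤) ∧
    (∀ u ∈ Finset.Icc 1 n, (u : ℕ∞) < lp.2 u ∧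
      ∀ m : ℕ, lp.2 u = (m : ℕ∞) → m ∈ Finset.Icc 2 n) ∧
    (∀ i₀ ∈ Finset.Icc 1 (n - 1), lp.1 (i₀ + 1) < lp.1 i₀ →
      ∃ u ∈ Finset.Icc 1 n, lp.2 u = ((lp.1 (i₀ + 1) : ℕ) : ℕ∞)) ∧
    {u : ℕ | u ∈ Finset.Icc 1 n ∧ lp.2 u = ⊤}.ncard = i ∧
    ((fun u => lp.2 u) '' Set.Icc 1 n).ncard = j + 1}

variable {n i j : ℕ}

theorem Sfin_card (hi : 1 ≤ i) (x : Xt n i j) : (Sfin n x.1.2).card = j := by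
  obtain ⟨⟨l, p⟩, h1, h2, h3, h4, h5, h6⟩ := x
  simp only at h5 h6 ⊢
  have htop : (⊤ : ℕ∞) ∈ (fun u => p u) '' Set.Icc 1 n := by
    have hne : {u : ℕ | u ∈ Finset.Icc 1 n ∧ p u = ⊤}.Nonempty := by
      apply Set.nonempty_of_ncard_ne_zero
      rw [h5]; omega
    obtain ⟨u, hu1, hu2⟩ := hne
    rw [Finset.mem_Icc] at hu1
    exact ⟨u, Set.mem_Icc.2 hu1, hu2⟩
  have himg : (fun u => p u) '' Set.Icc 1 n =
      insert (⊤ : ℕ∞) ((fun m : ℕ => (m : ℕ∞)) '' (Sfin n p : Set ℕ)) := by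
    ext v
    constructor
    · rintro ⟨u, hu, rfl⟩
      have huI : u ∈ Finset.Icc 1 n := Finset.mem_Icc.2 (Set.mem_Icc.1 hu)
      show p u ∈ _
      cases hpu : p u with
      | top => exact Set.mem_insert _ _
      | coe m =>
        refine Set.mem_insert_of_mem _ ⟨m, ?_, rfl⟩
        rw [Finset.mem_coe, mem_Sfin]
        exact ⟨(h3 u huI).2 m hpu, u, huI, hpu⟩
    · intro hv
      rcases Set.mem_insert_iff.1 hv with rfl | ⟨m, hm, rfl⟩
      · exact htop
      · rw [Finset.mem_coe, mem_Sfin] at hm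
        obtain ⟨-, u, huI, hpu⟩ := hm
        rw [Finset.mem_Icc] at huI
        exact ⟨u, Set.mem_Icc.2 huI, hpu⟩
  rw [himg, Set.ncard_insert_of_notMem (by simp)
      (((Sfin n p).finite_toSet).image _),
    Set.ncard_image_of_injective _ (fun a b hab => by exact_mod_cast hab),
    Set.ncard_coe_finset] at h6
  omega

theorem W.valid_iff_perm {p : ℕ → ℕ∞} (y : W n j (Sfin n p))
    (hp3 : ∀ u ∈ Finset.Icc 1 n, ∀ m : ℕ, p u = (m : ℕ∞) → m ∈ Finset.Icc 2 n) :
    y.Valid ↔ ∀ i₀ ∈ Finset.Icc 1 (n - 1), y.perm (i₀ + 1) < y.perm i₀ →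
      ∃ u ∈ Finset.Icc 1 n, p u = ((y.perm (i₀ + 1) : ℕ) : ℕ∞) := by
  simp only [W.Valid, List.Chain']
  rw [List.isChain_iff_getElem]
  constructor
  · intro h i₀ hi₀ hd
    rw [Finset.mem_Icc] at hi₀
    have hti : i₀ - 1 + 1 < y.w.length := by rw [y.hlen]; omega
    have hR := h (i₀ - 1) hti
    have hgete : ∀ (a b : ℕ) (ha : a < y.w.length) (hb : b < y.w.length), a = b →
        y.w.get ⟨a, ha⟩ = y.w.get ⟨b, hb⟩ := by
      intro a b ha hb hab
      subst hab
      rfl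
    have hlb : i₀ - 1 < y.w.length := by omega
    have hlb2 : i₀ - 1 + 1 < y.w.length := by omega
    have e1 : y.w[i₀ - 1] = y.perm i₀ := by
      have h1 := y.perm_get (t := i₀ - 1) (by rw [← y.hlen]; omega)
      simp only [List.get_eq_getElem] at h1
      have h2 : i₀ - 1 + 1 = i₀ := by omega
      exact h1.symm.trans (congrArg y.perm h2)
    have e2 : y.w[i₀ - 1 + 1] = y.perm (i₀ + 1) := by
      have h1 := y.perm_get (t := i₀) (by rw [← y.hlen]; omega)
      simp only [List.get_eq_getElem] at h1
      have h2 : i₀ - 1 + 1 = i₀ := by omega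
      simp only [h2]
      exact h1.symm
    rw [e1, e2] at hR
    have hmem := hR hd
    rw [mem_Sfin] at hmem
    exact hmem.2
  · intro h t ht hd
    have htn : t < n - 1 := by rw [y.hlen] at ht; omega
    have hi₀ : t + 1 ∈ Finset.Icc 1 (n - 1) := Finset.mem_Icc.2 ⟨by omega, by omega⟩
    have e1 : y.w[t] = y.perm (t + 1) := by
      have h1 := y.perm_get (t := t) (by omega)
      simp only [List.get_eq_getElem] at h1
      exact h1.symm
    have e2 : y.w[t + 1] = y.perm (t + 1 + 1) := by
      have h1 := y.perm_get (t := t + 1) (by omega)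
      simp only [List.get_eq_getElem] at h1
      exact h1.symm
    rw [e1] at hd
    rw [e2] at hd ⊢
    obtain ⟨u, huI, hpu⟩ := h (t + 1) hi₀ hd
    rw [mem_Sfin]
    exact ⟨hp3 u huI _ hpu, u, huI, hpu⟩

noncomputable def WX (hi : 1 ≤ i) (x : Xt n i j) : W n j (Sfin n x.1.2) :=
  ofPerm n j _ x.1.1 x.2.1 (Sfin_card hi x) (Sfin_sub n _)

theorem WX_perm (hi : 1 ≤ i) (x : Xt n i j) : (WX hi x).perm = x.1.1 :=
  ofPerm_perm n j _ x.1.1 x.2.1 (Sfin_card hi x) (Sfin_sub n _)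

theorem WX_valid (hi : 1 ≤ i) (x : Xt n i j) : (WX hi x).Valid := by
  rw [W.valid_iff_perm _ (fun u hu m hm => (x.2.2.2.1 u hu).2 m hm), WX_perm]
  exact x.2.2.2.2.1

noncomputable def ActX (hi : 1 ≤ i) (σ : Equiv.Perm (Fin j)) (x : Xt n i j) : Xt n i j :=
  ⟨(((WX hi x).act σ).perm, x.1.2), by
    obtain ⟨c1, c2, c3, c4, c5, c6⟩ := x.2
    refine ⟨?_, c2, c3, ?_, c5, c6⟩
    · intro k hk
      exact W.pfun_out _ (by rw [Finset.mem_Icc] at hk; omega)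
    · have hv : ((WX hi x).act σ).Valid := ((WX hi x).act_valid σ).2 (WX_valid hi x)
      exact (W.valid_iff_perm _ (fun u hu m hm => (c3 u hu).2 m hm)).1 hv⟩

theorem ActX_snd (hi : 1 ≤ i) (σ : Equiv.Perm (Fin j)) (x : Xt n i j) :
    (ActX hi σ x).1.2 = x.1.2 := rfl

theorem WX_ActX (hi : 1 ≤ i) (σ : Equiv.Perm (Fin j)) (x : Xt n i j) :
    WX hi (ActX hi σ x) = (WX hi x).act σ := by
  apply W.ext'
  exact W.perm_word ((WX hi x).act σ)

noncomputable def PatX (hi : 1 ≤ i) (x : Xt n i j) : Equiv.Perm (Fin j) :=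
  (WX hi x).pat

theorem PatX_ActX (hi : 1 ≤ i) (σ : Equiv.Perm (Fin j)) (x : Xt n i j) :
    PatX hi (ActX hi σ x) = σ * PatX hi x := by
  rw [PatX, WX_ActX]
  exact W.act_pat _ σ

theorem ActX_ActX (hi : 1 ≤ i) (σ τ : Equiv.Perm (Fin j)) (x : Xt n i j) :
    ActX hi σ (ActX hi τ x) = ActX hi (σ * τ) x := by
  apply Subtype.ext
  apply Prod.ext
  · show (((WX hi (ActX hi τ x)).act σ).perm : Equiv.Perm ℕ) = ((WX hi x).act (σ * τ)).perm
    rw [WX_ActX]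
    exact congrArg W.perm (W.act_act _ σ τ)
  · rfl

theorem ActX_one (hi : 1 ≤ i) (x : Xt n i j) : ActX hi 1 x = x := by
  apply Subtype.ext
  apply Prod.ext
  · show ((WX hi x).act 1).perm = x.1.1
    rw [W.act_one, WX_perm]
  · rfl

noncomputable def mainEquiv (hi : 1 ≤ i) :
    Xt n i j ≃ Equiv.Perm (Fin j) × {x : Xt n i j // PatX hi x = 1} where
  toFun x := (PatX hi x, ⟨ActX hi (PatX hi x)⁻¹ x, by
    rw [PatX_ActX, inv_mul_cancel]⟩)
  invFun sy := ActX hi sy.1 sy.2.1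
  left_inv x := by
    simp only
    rw [ActX_ActX, mul_inv_cancel, ActX_one]
  right_inv := by
    rintro ⟨σ, y, hy⟩
    have hpat : PatX hi (ActX hi σ y) = σ := by
      rw [PatX_ActX, hy, mul_one]
    refine Prod.ext ?_ ?_
    · exact hpat
    · apply Subtype.ext
      show ActX hi (PatX hi (ActX hi σ y))⁻¹ (ActX hi σ y) = y
      rw [hpat, ActX_ActX, inv_mul_cancel, ActX_one]

theorem card_dvd (hi : 1 ≤ i) : Nat.factorial j ∣ Nat.card (Xt n i j) := by
  rw [Nat.card_congr (mainEquiv hi), Nat.card_prod]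
  have hcard : Nat.card (Equiv.Perm (Fin j)) = Nat.factorial j := by
    rw [Nat.card_eq_fintype_card, Fintype.card_perm, Fintype.card_fin]
  rw [hcard]
  exact Dvd.intro _ rfl

end AltAux

/-- `altA n i j` is the number `A(n,i,j)` of pairs `(λ, p)` where `λ` is a
permutation of `{1,…,n}` (extended by the identity on the rest of `ℕ`),
`p : {1,…,n} → {2,…,n} ∪ {∞}` satisfies `p k > k` for all `k` (extended by `∞`
outside `{1,…,n}`), for every descent position `i₀` of `λ` the value
`λ (i₀+1)` lies in the image `p({1,…,n})`, exactly `i` elements of `{1,…,n}`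
are sent to `∞` by `p`, and the image `p({1,…,n})` has exactly `j+1` elements
(including `∞`). These pairs are exactly the largest maximal representations of
alternation acyclic tournaments of type `(n,i,j)`. -/
noncomputable def altA (n i j : ℕ) : ℕ :=
  Nat.card {lp : Equiv.Perm ℕ × (ℕ → ℕ∞) //
    (∀ x, x ∉ Finset.Icc 1 n → lp.1 x = x) ∧
    (∀ x, x ∉ Finset.Icc 1 n → lp.2 x = ⊤) ∧
    (∀ u ∈ Finset.Icc 1 n, (u : ℕ∞) < lp.2 u ∧
      ∀ m : ℕ, lp.2 u = (m : ℕ∞) → m ∈ Finset.Icc 2 n) ∧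
    (∀ i₀ ∈ Finset.Icc 1 (n - 1), lp.1 (i₀ + 1) < lp.1 i₀ →
      ∃ u ∈ Finset.Icc 1 n, lp.2 u = ((lp.1 (i₀ + 1) : ℕ) : ℕ∞)) ∧
    {u : ℕ | u ∈ Finset.Icc 1 n ∧ lp.2 u = ⊤}.ncard = i ∧
    ((fun u => lp.2 u) '' Set.Icc 1 n).ncard = j + 1}

/-- For all `n ≥ 1`, `i ≥ 1` and `j ≥ 0`, the factorial `j!`
divides `A(n,i,j)`. -/
theorem factorial_dvd_altA (n i j : ℕ) (hn : 1 ≤ n) (hi : 1 ≤ i) :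
    Nat.factorial j ∣ altA n i j := by
  have h : altA n i j = Nat.card (AltAux.Xt n i j) := rfl
  rw [h]
  exact AltAux.card_dvd hi
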